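/- Let X be a totally bounded metric space and let Λ be a normalized positive linear functional on C_b(X). Then there exists a Borel probability measure μ̂ on the completion X̂ of X (which is a compact metric space) such that for every uniformly continuous f ∈ C_b(X), Λ f = ∫ f̂ dμ̂, where f̂ : X̂ → ℝ is the unique continuous extension of f to the completion. -/

import Mathlib

open MeasureTheory Filter Topology BoundedContinuousFunction Set
open scoped NNReal ENNReal


theorem sum_clamp (n : ℕ) (y : ℝ) (h0 : 0 ≤ y) (hn : y ≤ n) :
    ∑ k ∈ Finset.range n, min 1 (max 0 (y - k)) = y := by
  induction n with
  | zero => simp at hn ⊢; linarith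
  | succ n ih =>
    rw [Finset.sum_range_succ]
    by_cases h : y ≤ n
    · rw [ih h]
      have : y - n ≤ 0 := by linarith
      rw [max_eq_left this, min_eq_right (by norm_num : (0:ℝ) ≤ 1)]
      ring
    · push_neg at h
      have hterm : ∀ k ∈ Finset.range n, min 1 (max 0 (y - k)) = 1 := by
        intro k hk
        have hk' : (k : ℝ) ≤ (n : ℝ) - 1 := by
          have := Finset.mem_range.mp hk
          have : (k : ℝ) + 1 ≤ n := by exact_mod_cast this
          linarith
        have h1 : (1:ℝ) ≤ y - k := by linarith
        rw [max_eq_right (by linarith : (0:ℝ) ≤ y - k), min_eq_left h1]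
      rw [Finset.sum_congr rfl hterm, Finset.sum_const, Finset.card_range]
      have h2 : (0:ℝ) ≤ y - n := by linarith
      have h3 : y - n ≤ 1 := by
        have : (y:ℝ) ≤ n + 1 := by exact_mod_cast hn
        linarith
      rw [max_eq_right h2, min_eq_right h3, nsmul_eq_mul, mul_one]
      ring


namespace RMKaux

variable {Y : Type*} [MetricSpace Y] [CompactSpace Y]
variable (Λ : (Y →ᵇ ℝ) →ₗ[ℝ] ℝ)

/-- The test set: values of `Λ` on nonnegative functions that dominate `1` on `K`. -/
def rset (K : Set Y) : Set ℝ :=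
  {r | ∃ f : Y →ᵇ ℝ, 0 ≤ f ∧ (∀ x ∈ K, 1 ≤ f x) ∧ Λ f = r}

/-- The Riesz content of a set. -/
noncomputable def lam (K : Set Y) : ℝ := sInf (rset Λ K)

theorem zero_le_one' : (0 : Y →ᵇ ℝ) ≤ 1 := by
  intro x; simp

theorem rset_nonempty (K : Set Y) : (rset Λ K).Nonempty :=
  ⟨Λ 1, 1, zero_le_one', fun x _ => le_refl _, rfl⟩

variable (hpos : ∀ f : Y →ᵇ ℝ, 0 ≤ f → 0 ≤ Λ f) (hone : Λ 1 = 1)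

include hpos

theorem lmono {f g : Y →ᵇ ℝ} (h : f ≤ g) : Λ f ≤ Λ g := by
  have := hpos _ (sub_nonneg.mpr h)
  rw [map_sub] at this; linarith

theorem rset_bddBelow (K : Set Y) : BddBelow (rset Λ K) := by
  refine ⟨0, fun r hr => ?_⟩
  obtain ⟨f, hf0, -, rfl⟩ := hr
  exact hpos f hf0

theorem lam_nonneg (K : Set Y) : 0 ≤ lam Λ K := by
  refine le_csInf (rset_nonempty Λ K) fun r hr => ?_
  obtain ⟨f, hf0, -, rfl⟩ := hr
  exact hpos f hf0

theorem lam_le {K : Set Y} {f : Y →ᵇ ℝ} (hf0 : 0 ≤ f) (hf1 : ∀ x ∈ K, 1 ≤ f x) :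
    lam Λ K ≤ Λ f :=
  csInf_le (rset_bddBelow Λ hpos K) ⟨f, hf0, hf1, rfl⟩

theorem lam_mono {K₁ K₂ : Set Y} (h : K₁ ⊆ K₂) : lam Λ K₁ ≤ lam Λ K₂ := by
  refine le_csInf (rset_nonempty Λ K₂) fun r hr => ?_
  obtain ⟨f, hf0, hf1, rfl⟩ := hr
  exact lam_le Λ hpos hf0 fun x hx => hf1 x (h hx)

theorem lam_empty : lam Λ (∅ : Set Y) = 0 := by
  refine le_antisymm ?_ (lam_nonneg Λ hpos _)
  have := lam_le Λ hpos (K := (∅ : Set Y)) (f := 0) (le_refl _)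
    (fun x hx => absurd hx (notMem_empty x))
  rwa [map_zero] at this

/-- Key estimate: if `0 ≤ g ≤ 1` vanishes outside `K`, then `Λ g ≤ lam K`. -/
theorem le_lam {K : Set Y} {g : Y →ᵇ ℝ} (hg0 : 0 ≤ g) (hg1 : g ≤ 1)
    (hgK : ∀ x ∉ K, g x = 0) : Λ g ≤ lam Λ K := by
  refine le_csInf (rset_nonempty Λ K) fun r hr => ?_
  obtain ⟨f, hf0, hf1, rfl⟩ := hr
  refine lmono Λ hpos fun x => ?_
  by_cases hx : x ∈ K
  · calc g x ≤ (1 : Y →ᵇ ℝ) x := hg1 x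
      _ = 1 := rfl
      _ ≤ f x := hf1 x hx
  · show g x ≤ f x
    rw [hgK x hx]; exact hf0 x

theorem lam_union_le (K₁ K₂ : Set Y) :
    lam Λ (K₁ ∪ K₂) ≤ lam Λ K₁ + lam Λ K₂ := by
  refine le_of_forall_pos_le_add fun ε hε => ?_
  obtain ⟨r₁, hr₁, hlt₁⟩ := exists_lt_of_csInf_lt (rset_nonempty Λ K₁)
    (lt_add_of_pos_right (lam Λ K₁) (half_pos hε))
  obtain ⟨r₂, hr₂, hlt₂⟩ := exists_lt_of_csInf_lt (rset_nonempty Λ K₂)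
    (lt_add_of_pos_right (lam Λ K₂) (half_pos hε))
  obtain ⟨f₁, hf₁0, hf₁1, rfl⟩ := hr₁
  obtain ⟨f₂, hf₂0, hf₂1, rfl⟩ := hr₂
  have h0 : (0 : Y →ᵇ ℝ) ≤ f₁ + f₂ := by
    intro x
    have h1 := hf₁0 x; have h2 := hf₂0 x
    show (0 : ℝ) ≤ f₁ x + f₂ x
    have h1' : (0:ℝ) ≤ f₁ x := h1
    have h2' : (0:ℝ) ≤ f₂ x := h2
    linarith
  have h1 : ∀ x ∈ K₁ ∪ K₂, 1 ≤ (f₁ + f₂) x := by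
    intro x hx
    show (1:ℝ) ≤ f₁ x + f₂ x
    rcases hx with hx | hx
    · have := hf₁1 x hx; have h2' : (0:ℝ) ≤ f₂ x := hf₂0 x; linarith
    · have := hf₂1 x hx; have h1' : (0:ℝ) ≤ f₁ x := hf₁0 x; linarith
  have := lam_le Λ hpos h0 h1
  rw [map_add] at this
  linarith

/-- Superadditivity on disjoint closed sets. -/
theorem add_le_lam_union {K₁ K₂ : Set Y} (hK₁ : IsClosed K₁) (hK₂ : IsClosed K₂)
    (hd : Disjoint K₁ K₂) : lam Λ K₁ + lam Λ K₂ ≤ lam Λ (K₁ ∪ K₂) := by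
  obtain ⟨φ₀, hφs, hφt, hφ01⟩ := exists_continuous_zero_one_of_isClosed hK₂ hK₁ hd.symm
  set φ : Y →ᵇ ℝ := mkOfCompact φ₀ with hφ
  refine le_csInf (rset_nonempty Λ _) fun r hr => ?_
  obtain ⟨f, hf0, hf1, rfl⟩ := hr
  have hmul0 : (0 : Y →ᵇ ℝ) ≤ f * φ := by
    intro x
    show (0:ℝ) ≤ f x * φ x
    exact mul_nonneg (hf0 x) (hφ01 x).1
  have hmul1 : ∀ x ∈ K₁, 1 ≤ (f * φ) x := by
    intro x hx
    show (1:ℝ) ≤ f x * φ x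
    have h1 : φ x = 1 := hφt hx
    rw [h1, mul_one]
    exact hf1 x (Or.inl hx)
  have hmul0' : (0 : Y →ᵇ ℝ) ≤ f * (1 - φ) := by
    intro x
    show (0:ℝ) ≤ f x * (1 - φ) x
    have : ((1 - φ) x : ℝ) = 1 - φ x := rfl
    rw [this]
    have h2 : φ x ≤ 1 := (hφ01 x).2
    exact mul_nonneg (hf0 x) (by linarith)
  have hmul1' : ∀ x ∈ K₂, 1 ≤ (f * (1 - φ)) x := by
    intro x hx
    show (1:ℝ) ≤ f x * (1 - φ) x
    have h0 : φ x = 0 := hφs hx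
    have : ((1 - φ) x : ℝ) = 1 - φ x := rfl
    rw [this, h0, sub_zero, mul_one]
    exact hf1 x (Or.inr hx)
  have h₁ := lam_le Λ hpos hmul0 hmul1
  have h₂ := lam_le Λ hpos hmul0' hmul1'
  have hsum : Λ (f * φ) + Λ (f * (1 - φ)) = Λ f := by
    rw [← map_add]
    congr 1
    ring
  linarith

include hone

theorem lam_le_one (K : Set Y) : lam Λ K ≤ 1 := by
  have := lam_le Λ hpos (K := K) (f := 1) (zero_le_one' ) (fun x _ => le_refl _)
  rwa [hone] at this

theorem lam_univ : lam Λ (univ : Set Y) = 1 := by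
  refine le_antisymm (lam_le_one Λ hpos hone _) ?_
  refine le_csInf (rset_nonempty Λ _) fun r hr => ?_
  obtain ⟨f, hf0, hf1, rfl⟩ := hr
  have h2 := lmono Λ hpos (f := 1) (g := f) (fun x => hf1 x (mem_univ x))
  rwa [hone] at h2

/-- The Riesz content as a bundled `Content`. -/
noncomputable def rieszCont : Content Y where
  toFun K := Real.toNNReal (lam Λ K)
  mono' K₁ K₂ h := Real.toNNReal_mono (lam_mono Λ hpos h)
  sup_disjoint' K₁ K₂ hd h₁ h₂ := by
    have he : lam Λ ((K₁ ⊔ K₂ : TopologicalSpace.Compacts Y) : Set Y)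
        = lam Λ (K₁ : Set Y) + lam Λ (K₂ : Set Y) := by
      rw [TopologicalSpace.Compacts.coe_sup]
      exact le_antisymm (lam_union_le Λ hpos _ _) (add_le_lam_union Λ hpos h₁ h₂ hd)
    show (lam Λ ((K₁ ⊔ K₂ : TopologicalSpace.Compacts Y) : Set Y)).toNNReal
      = (lam Λ (K₁ : Set Y)).toNNReal + (lam Λ (K₂ : Set Y)).toNNReal
    rw [he, Real.toNNReal_add (lam_nonneg Λ hpos _) (lam_nonneg Λ hpos _)]
  sup_le' K₁ K₂ := by
    have h := lam_union_le Λ hpos (K₁ : Set Y) (K₂ : Set Y)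
    calc Real.toNNReal (lam Λ ((K₁ ⊔ K₂ : TopologicalSpace.Compacts Y) : Set Y))
        ≤ Real.toNNReal (lam Λ (K₁ : Set Y) + lam Λ (K₂ : Set Y)) := by
          apply Real.toNNReal_mono
          rw [TopologicalSpace.Compacts.coe_sup]; exact h
      _ = _ := Real.toNNReal_add (lam_nonneg Λ hpos _) (lam_nonneg Λ hpos _)

include hpos hone in
/-- Approximation of the content from outside by compact neighborhoods. -/
theorem exists_compact_interior {K : Set Y} (hK : IsCompact K) {ε : ℝ} (hε : 0 < ε) :
    ∃ K' : TopologicalSpace.Compacts Y, K ⊆ interior (K' : Set Y) ∧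
      lam Λ (K' : Set Y) ≤ lam Λ K + ε := by
  set ε' : ℝ := min ε 1 with hε'def
  have hε'pos : 0 < ε' := lt_min hε one_pos
  have hε'le : ε' ≤ 1 := min_le_right _ _
  obtain ⟨r, hr, hlt⟩ := exists_lt_of_csInf_lt (rset_nonempty Λ K)
    (lt_add_of_pos_right (lam Λ K) (by positivity : (0:ℝ) < ε' / 4))
  obtain ⟨f, hf0, hf1, rfl⟩ := hr
  set δ : ℝ := ε' / 4 with hδdef
  have hδpos : 0 < δ := by positivity
  have h1δ : 0 < 1 - δ := by
    simp only [hδdef]; linarith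
  set K' : Set Y := {x | 1 - δ ≤ f x} with hK'def
  have hK'closed : IsClosed K' := isClosed_le continuous_const f.continuous
  refine ⟨⟨K', hK'closed.isCompact⟩, ?_, ?_⟩
  · have hsub : K ⊆ {x | 1 - δ < f x} := fun x hx => lt_of_lt_of_le (by linarith) (hf1 x hx)
    have hopen : IsOpen {x | 1 - δ < f x} := isOpen_lt continuous_const f.continuous
    have h2 : {x | 1 - δ < f x} ⊆ interior K' :=
      interior_maximal (fun y hy => (le_of_lt hy : 1 - δ ≤ f y)) hopen
    intro x hx
    exact h2 (hsub hx)
  · have hmem : lam Λ K' ≤ Λ ((1 - δ)⁻¹ • f) := by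
      apply lam_le Λ hpos
      · intro x
        have := hf0 x
        show (0:ℝ) ≤ (1 - δ)⁻¹ * f x
        exact mul_nonneg (inv_nonneg.mpr h1δ.le) this
      · intro x hx
        show (1:ℝ) ≤ (1 - δ)⁻¹ * f x
        have hx' : 1 - δ ≤ f x := hx
        rw [inv_mul_eq_div, le_div_iff₀ h1δ, one_mul]
        exact hx'
    rw [LinearMap.map_smul, smul_eq_mul] at hmem
    have hL0 : 0 ≤ lam Λ K := lam_nonneg Λ hpos K
    have hL1 : lam Λ K ≤ 1 := lam_le_one Λ hpos hone K
    have key : (1 - δ)⁻¹ * Λ f ≤ lam Λ K + ε' := by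
      rw [inv_mul_le_iff₀ h1δ]
      nlinarith [hlt, hε'le, hδpos, hε'pos]
    have : lam Λ K + ε' ≤ lam Λ K + ε := by
      have := min_le_left ε 1
      simp only [hε'def]
      linarith
    show lam Λ K' ≤ lam Λ K + ε
    linarith


include hpos hone in
theorem rieszCont_regular : (rieszCont Λ hpos).ContentRegular := by
  intro K
  refine le_antisymm (le_iInf fun K' => le_iInf fun hK' =>
    (rieszCont Λ hpos).mono _ _ (hK'.trans interior_subset)) ?_
  refine ENNReal.le_of_forall_pos_le_add fun ε hε _ => ?_
  have hεR : (0:ℝ) < (ε : ℝ) := hε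
  obtain ⟨K', hK'int, hK'le⟩ := exists_compact_interior Λ hpos hone (K := (K : Set Y)) K.isCompact hεR
  have hle : (rieszCont Λ hpos) K' ≤ (rieszCont Λ hpos) K + (ε : ℝ≥0∞) := by
    have h1 : (lam Λ (K' : Set Y)).toNNReal ≤ (lam Λ (K : Set Y)).toNNReal + ε := by
      have := Real.toNNReal_mono hK'le
      rwa [Real.toNNReal_add (lam_nonneg Λ hpos _) (le_of_lt hεR), Real.toNNReal_coe] at this
    calc (rieszCont Λ hpos) K' = ((lam Λ (K' : Set Y)).toNNReal : ℝ≥0∞) := rfl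
      _ ≤ (((lam Λ (K : Set Y)).toNNReal + ε : ℝ≥0) : ℝ≥0∞) := by exact_mod_cast h1
      _ = (rieszCont Λ hpos) K + (ε : ℝ≥0∞) := by rw [ENNReal.coe_add]; rfl
  refine le_trans ?_ hle
  exact iInf_le_of_le K' (iInf_le_of_le hK'int le_rfl)

variable [MeasurableSpace Y] [BorelSpace Y]

/-- The Riesz measure associated to the functional. -/
noncomputable def rieszMeasure : Measure Y := (rieszCont Λ hpos).measure

include hone in
theorem rieszMeasure_compact {K : Set Y} (hK : IsCompact K) :
    rieszMeasure Λ hpos K = ENNReal.ofReal (lam Λ K) := by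
  have h := (rieszCont Λ hpos).measure_eq_content_of_regular (rieszCont_regular Λ hpos hone)
    ⟨K, hK⟩
  calc rieszMeasure Λ hpos K
      = (rieszCont Λ hpos).measure ((⟨K, hK⟩ : TopologicalSpace.Compacts Y) : Set Y) := rfl
    _ = ((rieszCont Λ hpos).toFun ⟨K, hK⟩ : ℝ≥0∞) := h
    _ = ENNReal.ofReal (lam Λ K) := by simp [rieszCont, ENNReal.ofReal]

include hone in
theorem rieszMeasure_univ : rieszMeasure Λ hpos (univ : Set Y) = 1 := by
  rw [rieszMeasure_compact Λ hpos hone isCompact_univ, lam_univ Λ hpos hone]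
  simp

include hone in
theorem rieszMeasure_isProb : IsProbabilityMeasure (rieszMeasure Λ hpos) :=
  ⟨rieszMeasure_univ Λ hpos hone⟩

include hone in
theorem rieszMeasure_compact_toReal {K : Set Y} (hK : IsCompact K) :
    (rieszMeasure Λ hpos K).toReal = lam Λ K := by
  rw [rieszMeasure_compact Λ hpos hone hK, ENNReal.toReal_ofReal (lam_nonneg Λ hpos K)]




omit hpos hone

theorem main_le {μ : Measure Y} [IsProbabilityMeasure μ]
    (hkey : ∀ K : Set Y, IsClosed K → ∀ h : Y →ᵇ ℝ, 0 ≤ h → h ≤ 1 →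
      (∀ x ∉ K, h x = 0) → Λ h ≤ (μ K).toReal)
    {g : Y →ᵇ ℝ} (hg0 : 0 ≤ g) (hg1 : g ≤ 1) :
    Λ g ≤ ∫ x, g x ∂μ := by
  refine le_of_forall_pos_le_add fun ε hε => ?_
  obtain ⟨n₀, hn₀⟩ := exists_nat_one_div_lt hε
  set n : ℕ := n₀ + 1 with hn
  have hnpos : (0:ℝ) < n := by positivity
  have baseLip : LipschitzWith 1 (fun t : ℝ => min 1 (max 0 t)) :=
    (LipschitzWith.id.const_max 0).const_min 1
  set h : ℕ → (Y →ᵇ ℝ) := fun k =>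
    BoundedContinuousFunction.comp _ baseLip
      ((n:ℝ) • g - BoundedContinuousFunction.const Y (k:ℝ)) with hhdef
  have happ : ∀ (k : ℕ) (x : Y), h k x = min 1 (max 0 ((n:ℝ) * g x - k)) := fun k x => rfl
  have hgx0 : ∀ x : Y, (0:ℝ) ≤ g x := fun x => hg0 x
  have hgx1 : ∀ x : Y, g x ≤ (1:ℝ) := fun x => hg1 x
  -- the `h k` sum up to `n • g`
  have hsum : ((n:ℝ) • g) = ∑ k ∈ Finset.range n, h k := by
    ext x
    have h1 : (((n:ℝ) • g) x : ℝ) = (n:ℝ) * g x := rfl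
    have h2 : ((∑ k ∈ Finset.range n, h k) x : ℝ) = ∑ k ∈ Finset.range n, h k x := by
      rw [BoundedContinuousFunction.coe_sum]
      simp
    rw [h1, h2]
    have := sum_clamp n ((n:ℝ) * g x) (mul_nonneg hnpos.le (hgx0 x))
      (by nlinarith [hgx1 x, hgx0 x])
    simp_rw [happ]
    rw [this]
  have hΛsum : (n:ℝ) * Λ g = ∑ k ∈ Finset.range n, Λ (h k) := by
    rw [← map_sum, ← hsum, LinearMap.map_smul, smul_eq_mul]
  -- the compact level sets
  set K : ℕ → Set Y := fun k => {x | (k:ℝ) ≤ (n:ℝ) * g x} with hKdef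
  have hKclosed : ∀ k, IsClosed (K k) :=
    fun k => isClosed_le continuous_const (continuous_const.mul g.continuous)
  have hΛk : ∀ k, Λ (h k) ≤ (μ (K k)).toReal := by
    intro k
    refine hkey (K k) (hKclosed k) (h k) ?_ ?_ ?_
    · intro x
      show (0:ℝ) ≤ h k x
      rw [happ]
      exact le_min zero_le_one (le_max_left _ _)
    · intro x
      show h k x ≤ (1:ℝ)
      rw [happ]
      exact min_le_left _ _
    · intro x hx
      rw [happ]
      have : (n:ℝ) * g x - k ≤ 0 := by
        have : ¬ ((k:ℝ) ≤ (n:ℝ) * g x) := hx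
        push_neg at this
        linarith
      rw [max_eq_left this, min_eq_right zero_le_one]
  -- indicator comparison
  have hmeas : ∀ k, MeasurableSet (K k) := fun k => (hKclosed k).measurableSet
  have hindInt : ∀ k : ℕ, Integrable ((K k).indicator (fun _ => (1:ℝ))) μ := fun k =>
    (integrable_indicator_iff (hmeas k)).mpr
      (integrableOn_const (measure_ne_top μ _))
  have hind : ∀ k : ℕ, (μ (K k)).toReal = ∫ x, (K k).indicator (fun _ => (1:ℝ)) x ∂μ := by
    intro k
    rw [integral_indicator_const (1:ℝ) (hmeas k), smul_eq_mul, mul_one]; rfl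
  have hpt : ∀ x : Y, ∑ k ∈ Finset.range n, (K k).indicator (fun _ => (1:ℝ)) x
      ≤ (n:ℝ) * g x + 1 := by
    intro x
    set m : ℕ := ⌊(n:ℝ) * g x⌋₊ with hm
    have step : ∀ k ∈ Finset.range n, (K k).indicator (fun _ => (1:ℝ)) x
        ≤ if k ≤ m then (1:ℝ) else 0 := by
      intro k _
      by_cases hx : x ∈ K k
      · have hk : k ≤ m := Nat.le_floor hx
        rw [Set.indicator_of_mem hx, if_pos hk]
      · rw [Set.indicator_of_notMem hx]
        split <;> norm_num
    calc ∑ k ∈ Finset.range n, (K k).indicator (fun _ => (1:ℝ)) x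
        ≤ ∑ k ∈ Finset.range n, (if k ≤ m then (1:ℝ) else 0) := Finset.sum_le_sum step
      _ = ((Finset.range n).filter (fun k => k ≤ m)).card := by
          rw [Finset.sum_boole]
      _ ≤ ((m:ℝ) + 1) := by
          have hsub : (Finset.range n).filter (fun k => k ≤ m) ⊆ Finset.range (m+1) := by
            intro k hk
            rw [Finset.mem_range]
            exact Nat.lt_succ_of_le (Finset.mem_filter.mp hk).2
          have := Finset.card_le_card hsub
          rw [Finset.card_range] at this
          exact_mod_cast this
      _ ≤ (n:ℝ) * g x + 1 := by
          have := Nat.floor_le (mul_nonneg hnpos.le (hgx0 x))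
          linarith
  have hgint : Integrable (fun x => g x) μ := g.integrable μ
  have hrhsInt : Integrable (fun x => (n:ℝ) * g x + 1) μ :=
    (hgint.const_mul _).add (integrable_const 1)
  have hsum_ind : ∑ k ∈ Finset.range n, (μ (K k)).toReal ≤ (n:ℝ) * (∫ x, g x ∂μ) + 1 := by
    calc ∑ k ∈ Finset.range n, (μ (K k)).toReal
        = ∑ k ∈ Finset.range n, ∫ x, (K k).indicator (fun _ => (1:ℝ)) x ∂μ :=
          Finset.sum_congr rfl fun k _ => hind k
      _ = ∫ x, ∑ k ∈ Finset.range n, (K k).indicator (fun _ => (1:ℝ)) x ∂μ :=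
          (integral_finset_sum _ fun k _ => hindInt k).symm
      _ ≤ ∫ x, ((n:ℝ) * g x + 1) ∂μ := by
          refine integral_mono (integrable_finset_sum _ fun k _ => hindInt k) hrhsInt hpt
      _ = (n:ℝ) * (∫ x, g x ∂μ) + 1 := by
          rw [integral_add (hgint.const_mul _) (integrable_const 1), integral_const_mul,
            integral_const]
          have : μ.real Set.univ = 1 := by
            simp
          rw [this, smul_eq_mul, one_mul]
  have hmain : (n:ℝ) * Λ g ≤ (n:ℝ) * (∫ x, g x ∂μ) + 1 := by
    rw [hΛsum]
    exact le_trans (Finset.sum_le_sum fun k _ => hΛk k) hsum_ind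
  have h1n : (1:ℝ)/n < ε := by
    have : ((n₀:ℝ) + 1) = (n:ℝ) := by push_cast [hn]; ring
    rwa [this] at hn₀
  have hεn : 1 < ε * n := by
    rw [div_lt_iff₀ hnpos] at h1n
    linarith
  have h2 : (n:ℝ) * Λ g ≤ (n:ℝ) * ((∫ x, g x ∂μ) + ε) := by nlinarith
  exact le_of_mul_le_mul_left h2 hnpos

theorem repr_all {μ : Measure Y} [IsProbabilityMeasure μ]
    (hpos : ∀ f : Y →ᵇ ℝ, 0 ≤ f → 0 ≤ Λ f) (hone : Λ 1 = 1)
    (hkey : ∀ K : Set Y, IsClosed K → ∀ h : Y →ᵇ ℝ, 0 ≤ h → h ≤ 1 →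
      (∀ x ∉ K, h x = 0) → Λ h ≤ (μ K).toReal)
    (f : Y →ᵇ ℝ) : Λ f = ∫ x, f x ∂μ := by
  have hμuniv : μ.real Set.univ = 1 := by simp
  have heq01 : ∀ g : Y →ᵇ ℝ, 0 ≤ g → g ≤ 1 → Λ g = ∫ x, g x ∂μ := by
    intro g hg0 hg1
    have h1 := main_le Λ hkey hg0 hg1
    have hg0' : ∀ x : Y, (0:ℝ) ≤ g x := fun x => hg0 x
    have hg1' : ∀ x : Y, g x ≤ (1:ℝ) := fun x => hg1 x
    have h2 := main_le Λ hkey (g := 1 - g)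
      (by intro x; show (0:ℝ) ≤ 1 - g x; linarith [hg1' x])
      (by intro x; show (1:ℝ) - g x ≤ 1; linarith [hg0' x])
    have hΛ12 : Λ (1 - g) = 1 - Λ g := by rw [map_sub, hone]
    have hint12 : ∫ x, (1 - g) x ∂μ = 1 - ∫ x, g x ∂μ := by
      have : ∀ x : Y, ((1 - g) x : ℝ) = 1 - g x := fun x => rfl
      rw [show (fun x => (1 - g) x) = (fun x => 1 - g x) from funext this]
      rw [integral_sub (integrable_const 1) (g.integrable μ), integral_const, hμuniv,
        smul_eq_mul, one_mul]
    rw [hΛ12, hint12] at h2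
    linarith
  set c : ℝ := ‖f‖ + 1 with hc
  have hcpos : (0:ℝ) < c := by positivity
  have hbound : ∀ x : Y, |f x| ≤ ‖f‖ := fun x => f.norm_coe_le_norm x
  set g : Y →ᵇ ℝ := (2*c)⁻¹ • (f + const Y c) with hg
  have hg0 : 0 ≤ g := by
    intro x
    show (0:ℝ) ≤ (2*c)⁻¹ * (f x + c)
    have := abs_le.mp (hbound x)
    apply mul_nonneg (by positivity)
    simp only [hc]
    linarith [this.1]
  have hg1 : g ≤ 1 := by
    intro x
    show (2*c)⁻¹ * (f x + c) ≤ (1:ℝ)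
    have := abs_le.mp (hbound x)
    rw [inv_mul_le_iff₀ (by positivity), mul_one]
    simp only [hc]
    linarith [this.2]
  have hΛconst : Λ (const Y c) = c := by
    have : const Y c = c • (1 : Y →ᵇ ℝ) := by
      ext x; simp
    rw [this, LinearMap.map_smul, smul_eq_mul, hone, mul_one]
  have hΛg : Λ g = (2*c)⁻¹ * (Λ f + c) := by
    rw [hg, LinearMap.map_smul, map_add, hΛconst, smul_eq_mul]
  have hIg : ∫ x, g x ∂μ = (2*c)⁻¹ * ((∫ x, f x ∂μ) + c) := by
    have h1 : ∀ x : Y, (g x : ℝ) = (2*c)⁻¹ * (f x + c) := fun x => rfl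
    rw [show (fun x => g x) = (fun x => (2*c)⁻¹ * (f x + c)) from funext h1]
    rw [integral_const_mul, integral_add (f.integrable μ) (integrable_const c),
      integral_const, hμuniv, smul_eq_mul, one_mul]
  have := heq01 g hg0 hg1
  rw [hΛg, hIg] at this
  have h2c : (2*c)⁻¹ ≠ 0 := by positivity
  have := mul_left_cancel₀ h2c this
  linarith
end RMKaux

open UniformSpace in
/-- If `X` is a totally bounded metric space and `Λ` is a normalized positive
linear functional on `C_b(X)`, then there is a Borel probability measure `μ` on the completion
of `X` representing `Λ` on bounded uniformly continuous functions, via their unique continuous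
extensions to the completion. -/
theorem exists_measure_on_completion_representing_functional
    {X : Type*} [MetricSpace X]
    [MeasurableSpace (UniformSpace.Completion X)] [BorelSpace (UniformSpace.Completion X)]
    (hX : TotallyBounded (Set.univ : Set X))
    (Λ : BoundedContinuousFunction X ℝ →ₗ[ℝ] ℝ)
    (hpos : ∀ f : BoundedContinuousFunction X ℝ, 0 ≤ f → 0 ≤ Λ f)
    (hone : Λ 1 = 1) :
    ∃ μ : Measure (UniformSpace.Completion X), IsProbabilityMeasure μ ∧
      ∀ f : BoundedContinuousFunction X ℝ, UniformContinuous ⇑f →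
        Λ f = ∫ x, UniformSpace.Completion.extension (⇑f) x ∂μ := by
  -- the completion is a compact metric space
  haveI : CompactSpace (Completion X) := by
    constructor
    have h1 : TotallyBounded (Set.range ((↑) : X → Completion X)) := by
      rw [← Set.image_univ]
      exact TotallyBounded.image hX (Completion.uniformContinuous_coe X)
    have h2 : TotallyBounded (closure (Set.range ((↑) : X → Completion X))) :=
      h1.closure
    have h3 : closure (Set.range ((↑) : X → Completion X)) = Set.univ :=
      Completion.denseRange_coe.closure_range
    rw [← h3]
    exact TotallyBounded.isCompact_of_isClosed h2 isClosed_closure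
  -- restriction of functions on the completion to `X`
  let ι : C(X, Completion X) := ⟨((↑) : X → Completion X), Completion.continuous_coe X⟩
  let R : (Completion X →ᵇ ℝ) →ₗ[ℝ] (X →ᵇ ℝ) :=
    { toFun := fun g => g.compContinuous ι
      map_add' := fun g₁ g₂ => by ext x; rfl
      map_smul' := fun c g => by ext x; rfl }
  let Λ' : (Completion X →ᵇ ℝ) →ₗ[ℝ] ℝ := Λ.comp R
  have hpos' : ∀ g : Completion X →ᵇ ℝ, 0 ≤ g → 0 ≤ Λ' g := by
    intro g hg
    refine hpos _ fun x => ?_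
    exact hg (ι x)
  have hone' : Λ' 1 = 1 := by
    have hR1 : R 1 = 1 := by ext x; rfl
    show Λ (R 1) = 1
    rw [hR1, hone]
  -- the Riesz measure on the completion
  refine ⟨RMKaux.rieszMeasure Λ' hpos', RMKaux.rieszMeasure_isProb Λ' hpos' hone', ?_⟩
  haveI := RMKaux.rieszMeasure_isProb Λ' hpos' hone'
  have hkey : ∀ K : Set (Completion X), IsClosed K → ∀ h : Completion X →ᵇ ℝ,
      0 ≤ h → h ≤ 1 → (∀ x ∉ K, h x = 0) →
      Λ' h ≤ ((RMKaux.rieszMeasure Λ' hpos') K).toReal := by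
    intro K hK h h0 h1 hv
    rw [RMKaux.rieszMeasure_compact_toReal Λ' hpos' hone' hK.isCompact]
    exact RMKaux.le_lam Λ' hpos' h0 h1 hv
  intro f hf
  let g : Completion X →ᵇ ℝ :=
    BoundedContinuousFunction.mkOfCompact
      ⟨Completion.extension (⇑f), Completion.continuous_extension⟩
  have hrepr := RMKaux.repr_all Λ' hpos' hone' hkey g
  have hRg : R g = f := by
    ext x
    exact Completion.extension_coe hf x
  have hΛg : Λ' g = Λ f := by
    show Λ (R g) = Λ f
    rw [hRg]
  rw [hΛg] at hrepr
  exact hrepr
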